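/- Let C be a bivariate copula admitting a tail dependence function Λ, and define the normalized tail dependence functions Λ₁*(t) = Λ(t,1)/t, Λ₂*(t) = Λ(1,t)/t, and Λ*(t) = max(Λ₁*(t), Λ₂*(t)) for t ∈ (0,1]. Then Λ₁*, Λ₂*, and Λ* take values in [0,1], are continuous, and are decreasing on (0,1]; consequently, the limits Λ₁*(0) = lim_{t↓0} Λ₁*(t), Λ₂*(0) = lim_{t↓0} Λ₂*(t), and Λ*(0) = lim_{t↓0} Λ*(t) exist. -/

import Mathlib

open MeasureTheory Filter Set

/-- A bivariate copula: `C : [0,1]² → [0,1]` with the grounded/marginal conditions and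
the 2-increasing property. -/
def IsCopula (C : ℝ → ℝ → ℝ) : Prop :=
  (∀ u ∈ Icc (0:ℝ) 1, ∀ v ∈ Icc (0:ℝ) 1, C u v ∈ Icc (0:ℝ) 1) ∧
  (∀ u ∈ Icc (0:ℝ) 1, C u 0 = 0 ∧ C 0 u = 0 ∧ C u 1 = u ∧ C 1 u = u) ∧
  (∀ u u' v v' : ℝ, u ∈ Icc (0:ℝ) 1 → u' ∈ Icc (0:ℝ) 1 →
    v ∈ Icc (0:ℝ) 1 → v' ∈ Icc (0:ℝ) 1 → u ≤ u' → v ≤ v' →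
    0 ≤ C u' v' - C u' v - C u v' + C u v)

/-- `Λ` is the tail dependence function of `C`:
`Λ(u,v) = lim_{p↓0} C(pu,pv)/p` for every `(u,v) ∈ [0,∞)²`. -/
def HasTDF (C Λ : ℝ → ℝ → ℝ) : Prop :=
  ∀ u v : ℝ, 0 ≤ u → 0 ≤ v →
    Tendsto (fun p : ℝ => C (p * u) (p * v) / p)
      (nhdsWithin (0:ℝ) (Ioi 0)) (nhds (Λ u v))

section Aux

variable {C Λ : ℝ → ℝ → ℝ}

-- C is monotone in the second variable
lemma copula_mono2 (hC : IsCopula C) {u v v' : ℝ} (hu : u ∈ Icc (0:ℝ) 1)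
    (hv : v ∈ Icc (0:ℝ) 1) (hv' : v' ∈ Icc (0:ℝ) 1) (h : v ≤ v') : C u v ≤ C u v' := by
  have h2 := hC.2.2 0 u v v' ⟨le_refl 0, zero_le_one⟩ hu hv hv' hu.1 h
  have e1 := (hC.2.1 v hv).2.1
  have e2 := (hC.2.1 v' hv').2.1
  linarith

lemma copula_mono1 (hC : IsCopula C) {u u' v : ℝ} (hu : u ∈ Icc (0:ℝ) 1)
    (hu' : u' ∈ Icc (0:ℝ) 1) (hv : v ∈ Icc (0:ℝ) 1) (h : u ≤ u') : C u v ≤ C u' v := by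
  have h2 := hC.2.2 u u' 0 v hu hu' ⟨le_refl 0, zero_le_one⟩ hv h hv.1
  have e1 := (hC.2.1 u hu).1
  have e2 := (hC.2.1 u' hu').1
  linarith

lemma copula_lip1 (hC : IsCopula C) {u u' v : ℝ} (hu : u ∈ Icc (0:ℝ) 1)
    (hu' : u' ∈ Icc (0:ℝ) 1) (hv : v ∈ Icc (0:ℝ) 1) (h : u ≤ u') :
    C u' v - C u v ≤ u' - u := by
  have h2 := hC.2.2 u u' v 1 hu hu' hv ⟨zero_le_one, le_refl 1⟩ h hv.2
  have e1 := (hC.2.1 u hu).2.2.1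
  have e2 := (hC.2.1 u' hu').2.2.1
  linarith

lemma copula_lip2 (hC : IsCopula C) {u v v' : ℝ} (hu : u ∈ Icc (0:ℝ) 1)
    (hv : v ∈ Icc (0:ℝ) 1) (hv' : v' ∈ Icc (0:ℝ) 1) (h : v ≤ v') :
    C u v' - C u v ≤ v' - v := by
  have h2 := hC.2.2 u 1 v v' hu ⟨zero_le_one, le_refl 1⟩ hv hv' hu.2 h
  have e1 := (hC.2.1 v hv).2.2.2
  have e2 := (hC.2.1 v' hv').2.2.2
  linarith

/-- Eventually (as p → 0⁺), p * a ∈ Icc 0 1 for a ≥ 0. -/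
lemma eventually_mul_mem {a : ℝ} (ha : 0 ≤ a) :
    ∀ᶠ p in nhdsWithin (0:ℝ) (Ioi 0), p * a ∈ Icc (0:ℝ) 1 := by
  have hδ : (0:ℝ) < 1 / (a + 1) := by positivity
  filter_upwards [Ioo_mem_nhdsGT_of_mem (⟨le_refl 0, hδ⟩ : (0:ℝ) ∈ Ico 0 (1/(a+1)))]
    with p hp
  obtain ⟨hp0, hp1⟩ := hp
  constructor
  · positivity
  · calc p * a ≤ (1/(a+1)) * a := by nlinarith
    _ ≤ 1 := by rw [div_mul_eq_mul_div, div_le_one (by linarith)]; linarith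

/-- Λ is nonnegative. -/
lemma tdf_nonneg (hC : IsCopula C) (hΛ : HasTDF C Λ) {u v : ℝ} (hu : 0 ≤ u) (hv : 0 ≤ v) :
    0 ≤ Λ u v := by
  refine ge_of_tendsto (hΛ u v hu hv) ?_
  filter_upwards [eventually_mul_mem hu, eventually_mul_mem hv, self_mem_nhdsWithin]
    with p h1 h2 hp
  have := (hC.1 _ h1 _ h2).1
  exact div_nonneg this (le_of_lt hp)

lemma tdf_le_right (hC : IsCopula C) (hΛ : HasTDF C Λ) {u v : ℝ} (hu : 0 ≤ u) (hv : 0 ≤ v) :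
    Λ u v ≤ v := by
  refine le_of_tendsto (hΛ u v hu hv) ?_
  filter_upwards [eventually_mul_mem hu, eventually_mul_mem hv, self_mem_nhdsWithin]
    with p h1 h2 hp
  have hp0 : (0:ℝ) < p := hp
  have h3 : C (p*u) (p*v) ≤ C 1 (p*v) :=
    copula_mono1 hC h1 ⟨zero_le_one, le_refl 1⟩ h2 h1.2
  have h4 : C 1 (p*v) = p * v := (hC.2.1 _ h2).2.2.2
  rw [div_le_iff₀ hp0]
  rw [h4] at h3; linarith

lemma tdf_le_left (hC : IsCopula C) (hΛ : HasTDF C Λ) {u v : ℝ} (hu : 0 ≤ u) (hv : 0 ≤ v) :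
    Λ u v ≤ u := by
  refine le_of_tendsto (hΛ u v hu hv) ?_
  filter_upwards [eventually_mul_mem hu, eventually_mul_mem hv, self_mem_nhdsWithin]
    with p h1 h2 hp
  have hp0 : (0:ℝ) < p := hp
  have h3 : C (p*u) (p*v) ≤ C (p*u) 1 :=
    copula_mono2 hC h1 h2 ⟨zero_le_one, le_refl 1⟩ h2.2
  have h4 : C (p*u) 1 = p * u := (hC.2.1 _ h1).2.2.1
  rw [div_le_iff₀ hp0]
  rw [h4] at h3; linarith

lemma tdf_mono2 (hC : IsCopula C) (hΛ : HasTDF C Λ) {u v v' : ℝ} (hu : 0 ≤ u) (hv : 0 ≤ v)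
    (hv' : 0 ≤ v') (h : v ≤ v') : Λ u v ≤ Λ u v' := by
  refine le_of_tendsto_of_tendsto (hΛ u v hu hv) (hΛ u v' hu hv') ?_
  filter_upwards [eventually_mul_mem hu, eventually_mul_mem hv, eventually_mul_mem hv',
    self_mem_nhdsWithin] with p h1 h2 h3 hp
  have hp0 : (0:ℝ) < p := hp
  have hle : C (p*u) (p*v) ≤ C (p*u) (p*v') := copula_mono2 hC h1 h2 h3 (by nlinarith)
  exact div_le_div_of_nonneg_right hle hp0.le

lemma tdf_mono1 (hC : IsCopula C) (hΛ : HasTDF C Λ) {u u' v : ℝ} (hu : 0 ≤ u) (hu' : 0 ≤ u')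
    (hv : 0 ≤ v) (h : u ≤ u') : Λ u v ≤ Λ u' v := by
  refine le_of_tendsto_of_tendsto (hΛ u v hu hv) (hΛ u' v hu' hv) ?_
  filter_upwards [eventually_mul_mem hu, eventually_mul_mem hu', eventually_mul_mem hv,
    self_mem_nhdsWithin] with p h1 h2 h3 hp
  have hp0 : (0:ℝ) < p := hp
  have hle : C (p*u) (p*v) ≤ C (p*u') (p*v) := copula_mono1 hC h1 h2 h3 (by nlinarith)
  exact div_le_div_of_nonneg_right hle hp0.le

lemma tdf_lip1 (hC : IsCopula C) (hΛ : HasTDF C Λ) {u u' v : ℝ} (hu : 0 ≤ u) (hu' : 0 ≤ u')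
    (hv : 0 ≤ v) (h : u ≤ u') : Λ u' v - Λ u v ≤ u' - u := by
  have t1 : Tendsto (fun p : ℝ => C (p * u') (p * v) / p - C (p * u) (p * v) / p)
      (nhdsWithin (0:ℝ) (Ioi 0)) (nhds (Λ u' v - Λ u v)) :=
    (hΛ u' v hu' hv).sub (hΛ u v hu hv)
  refine le_of_tendsto t1 ?_
  filter_upwards [eventually_mul_mem hu, eventually_mul_mem hu', eventually_mul_mem hv,
    self_mem_nhdsWithin] with p h1 h2 h3 hp
  have hp0 : (0:ℝ) < p := hp
  have := copula_lip1 hC h1 h2 h3 (by nlinarith)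
  rw [div_sub_div_same, div_le_iff₀ hp0]
  nlinarith

/-- Homogeneity: Λ(s u, s v) = s Λ(u, v) for s > 0. -/
lemma tdf_homog (hΛ : HasTDF C Λ) {u v s : ℝ} (hu : 0 ≤ u) (hv : 0 ≤ v) (hs : 0 < s) :
    Λ (s * u) (s * v) = s * Λ u v := by
  have hmap : Tendsto (fun p : ℝ => p * s) (nhdsWithin (0:ℝ) (Ioi 0))
      (nhdsWithin (0:ℝ) (Ioi 0)) := by
    apply tendsto_nhdsWithin_of_tendsto_nhds_of_eventually_within
    · have : Tendsto (fun p : ℝ => p * s) (nhds 0) (nhds (0 * s)) :=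
        (continuous_mul_right s).tendsto 0
      simpa using this.mono_left nhdsWithin_le_nhds
    · filter_upwards [self_mem_nhdsWithin] with p hp
      exact mul_pos hp hs
  have t2 : Tendsto (fun p : ℝ => s * (C ((p * s) * u) ((p * s) * v) / (p * s)))
      (nhdsWithin (0:ℝ) (Ioi 0)) (nhds (s * Λ u v)) :=
    ((hΛ u v hu hv).comp hmap).const_mul s
  have t1 := hΛ (s * u) (s * v) (by positivity) (by positivity)
  have heq : ∀ᶠ p in nhdsWithin (0:ℝ) (Ioi 0),
      C (p * (s * u)) (p * (s * v)) / p
        = s * (C ((p * s) * u) ((p * s) * v) / (p * s)) := by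
    filter_upwards [self_mem_nhdsWithin] with p hp
    have hp0 : (0:ℝ) < p := hp
    rw [mul_assoc p s u, mul_assoc p s v] at *
    field_simp
  exact tendsto_nhds_unique (t1.congr' heq) t2

end Aux

lemma tdf_lip2 (hC : IsCopula C) (hΛ : HasTDF C Λ) {u v v' : ℝ} (hu : 0 ≤ u) (hv : 0 ≤ v)
    (hv' : 0 ≤ v') (h : v ≤ v') : Λ u v' - Λ u v ≤ v' - v := by
  have t1 : Tendsto (fun p : ℝ => C (p * u) (p * v') / p - C (p * u) (p * v) / p)
      (nhdsWithin (0:ℝ) (Ioi 0)) (nhds (Λ u v' - Λ u v)) :=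
    (hΛ u v' hu hv').sub (hΛ u v hu hv)
  refine le_of_tendsto t1 ?_
  filter_upwards [eventually_mul_mem hu, eventually_mul_mem hv, eventually_mul_mem hv',
    self_mem_nhdsWithin] with p h1 h2 h3 hp
  have hp0 : (0:ℝ) < p := hp
  have := copula_lip2 hC h1 h2 h3 (by nlinarith)
  rw [div_sub_div_same, div_le_iff₀ hp0]
  nlinarith

theorem normalized_tdf_properties (C Λ : ℝ → ℝ → ℝ)
    (hC : IsCopula C) (hΛ : HasTDF C Λ) :
    (∀ t ∈ Ioc (0:ℝ) 1, Λ t 1 / t ∈ Icc (0:ℝ) 1 ∧ Λ 1 t / t ∈ Icc (0:ℝ) 1 ∧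
      max (Λ t 1 / t) (Λ 1 t / t) ∈ Icc (0:ℝ) 1) ∧
    ContinuousOn (fun t => Λ t 1 / t) (Ioc (0:ℝ) 1) ∧
    ContinuousOn (fun t => Λ 1 t / t) (Ioc (0:ℝ) 1) ∧
    ContinuousOn (fun t => max (Λ t 1 / t) (Λ 1 t / t)) (Ioc (0:ℝ) 1) ∧
    AntitoneOn (fun t => Λ t 1 / t) (Ioc (0:ℝ) 1) ∧
    AntitoneOn (fun t => Λ 1 t / t) (Ioc (0:ℝ) 1) ∧
    AntitoneOn (fun t => max (Λ t 1 / t) (Λ 1 t / t)) (Ioc (0:ℝ) 1) ∧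
    (∃ l₁ : ℝ, Tendsto (fun t => Λ t 1 / t) (nhdsWithin (0:ℝ) (Ioi 0)) (nhds l₁)) ∧
    (∃ l₂ : ℝ, Tendsto (fun t => Λ 1 t / t) (nhdsWithin (0:ℝ) (Ioi 0)) (nhds l₂)) ∧
    (∃ l : ℝ, Tendsto (fun t => max (Λ t 1 / t) (Λ 1 t / t))
      (nhdsWithin (0:ℝ) (Ioi 0)) (nhds l)) := by
  -- Bounds
  have hbound : ∀ t ∈ Ioc (0:ℝ) 1, Λ t 1 / t ∈ Icc (0:ℝ) 1 ∧ Λ 1 t / t ∈ Icc (0:ℝ) 1 ∧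
      max (Λ t 1 / t) (Λ 1 t / t) ∈ Icc (0:ℝ) 1 := by
    intro t ht
    have ht0 : (0:ℝ) < t := ht.1
    have h1 : Λ t 1 / t ∈ Icc (0:ℝ) 1 := by
      constructor
      · exact div_nonneg (tdf_nonneg hC hΛ ht0.le zero_le_one) ht0.le
      · rw [div_le_one ht0]; exact tdf_le_left hC hΛ ht0.le zero_le_one
    have h2 : Λ 1 t / t ∈ Icc (0:ℝ) 1 := by
      constructor
      · exact div_nonneg (tdf_nonneg hC hΛ zero_le_one ht0.le) ht0.le
      · rw [div_le_one ht0]; exact tdf_le_right hC hΛ zero_le_one ht0.le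
    exact ⟨h1, h2, ⟨le_max_of_le_left h1.1, max_le h1.2 h2.2⟩⟩
  -- Continuity
  have hcont1 : ContinuousOn (fun t => Λ t 1 / t) (Ioc (0:ℝ) 1) := by
    have hlip : LipschitzOnWith 1 (fun t => Λ t 1) (Icc (0:ℝ) 1) := by
      apply LipschitzOnWith.of_dist_le_mul
      intro x hx y hy
      rw [NNReal.coe_one, one_mul, Real.dist_eq, Real.dist_eq]
      have key : ∀ a b : ℝ, a ∈ Icc (0:ℝ) 1 → b ∈ Icc (0:ℝ) 1 → a ≤ b →
          |Λ a 1 - Λ b 1| ≤ |a - b| := by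
        intro a b ha hb hab
        have h1 := tdf_mono1 hC hΛ ha.1 hb.1 zero_le_one hab
        have h2 := tdf_lip1 hC hΛ ha.1 hb.1 zero_le_one hab
        rw [abs_sub_comm (Λ a 1), abs_sub_comm a b,
          abs_of_nonneg (show (0:ℝ) ≤ Λ b 1 - Λ a 1 by linarith),
          abs_of_nonneg (show (0:ℝ) ≤ b - a by linarith)]
        linarith
      rcases le_total x y with h | h
      · exact key x y hx hy h
      · rw [abs_sub_comm, abs_sub_comm x y]; exact key y x hy hx h
    exact ((hlip.continuousOn.mono (Ioc_subset_Icc_self)).div continuousOn_id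
      (fun t ht => ne_of_gt ht.1))
  have hcont2 : ContinuousOn (fun t => Λ 1 t / t) (Ioc (0:ℝ) 1) := by
    have hlip : LipschitzOnWith 1 (fun t => Λ 1 t) (Icc (0:ℝ) 1) := by
      apply LipschitzOnWith.of_dist_le_mul
      intro x hx y hy
      rw [NNReal.coe_one, one_mul, Real.dist_eq, Real.dist_eq]
      have key : ∀ a b : ℝ, a ∈ Icc (0:ℝ) 1 → b ∈ Icc (0:ℝ) 1 → a ≤ b →
          |Λ 1 a - Λ 1 b| ≤ |a - b| := by
        intro a b ha hb hab
        have h1 := tdf_mono2 hC hΛ zero_le_one ha.1 hb.1 hab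
        have h2 := tdf_lip2 hC hΛ zero_le_one ha.1 hb.1 hab
        rw [abs_sub_comm (Λ 1 a), abs_sub_comm a b,
          abs_of_nonneg (show (0:ℝ) ≤ Λ 1 b - Λ 1 a by linarith),
          abs_of_nonneg (show (0:ℝ) ≤ b - a by linarith)]
        linarith
      rcases le_total x y with h | h
      · exact key x y hx hy h
      · rw [abs_sub_comm, abs_sub_comm x y]; exact key y x hy hx h
    exact ((hlip.continuousOn.mono (Ioc_subset_Icc_self)).div continuousOn_id
      (fun t ht => ne_of_gt ht.1))
  have hcontm : ContinuousOn (fun t => max (Λ t 1 / t) (Λ 1 t / t)) (Ioc (0:ℝ) 1) :=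
    hcont1.sup hcont2
  -- Key homogeneity identities
  have key1 : ∀ t : ℝ, 0 < t → Λ t 1 / t = Λ 1 t⁻¹ := by
    intro t ht
    have := tdf_homog hΛ (u := 1) (v := t⁻¹) zero_le_one (by positivity) ht
    rw [mul_one, mul_inv_cancel₀ (ne_of_gt ht)] at this
    rw [this]; field_simp
  have key2 : ∀ t : ℝ, 0 < t → Λ 1 t / t = Λ t⁻¹ 1 := by
    intro t ht
    have := tdf_homog hΛ (u := t⁻¹) (v := 1) (by positivity) zero_le_one ht
    rw [mul_one, mul_inv_cancel₀ (ne_of_gt ht)] at this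
    rw [this]; field_simp
  -- Antitonicity
  have hant1 : AntitoneOn (fun t => Λ t 1 / t) (Ioc (0:ℝ) 1) := by
    intro s hs t ht hst
    simp only
    rw [key1 s hs.1, key1 t ht.1]
    exact tdf_mono2 hC hΛ zero_le_one (inv_nonneg.2 ht.1.le) (inv_nonneg.2 hs.1.le)
      (inv_anti₀ hs.1 hst)
  have hant2 : AntitoneOn (fun t => Λ 1 t / t) (Ioc (0:ℝ) 1) := by
    intro s hs t ht hst
    simp only
    rw [key2 s hs.1, key2 t ht.1]
    exact tdf_mono1 hC hΛ (inv_nonneg.2 ht.1.le) (inv_nonneg.2 hs.1.le) zero_le_one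
      (inv_anti₀ hs.1 hst)
  have hantm : AntitoneOn (fun t => max (Λ t 1 / t) (Λ 1 t / t)) (Ioc (0:ℝ) 1) :=
    fun s hs t ht hst => max_le_max (hant1 hs ht hst) (hant2 hs ht hst)
  -- Limits
  have hlim : ∀ f : ℝ → ℝ, AntitoneOn f (Ioc (0:ℝ) 1) → (∀ t ∈ Ioc (0:ℝ) 1, f t ≤ 1) →
      ∃ l : ℝ, Tendsto f (nhdsWithin (0:ℝ) (Ioi 0)) (nhds l) := by
    intro f hf hb
    refine ⟨sSup (f '' Ioo (0:ℝ) 1), ?_⟩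
    apply AntitoneOn.tendsto_nhdsWithin_Ioo_right (y := 1)
    · exact ⟨1/2, by norm_num⟩
    · exact hf.mono (fun x hx => ⟨hx.1, hx.2.le⟩)
    · exact ⟨1, by rintro x ⟨y, hy, rfl⟩; exact hb y ⟨hy.1, hy.2.le⟩⟩
  refine ⟨hbound, hcont1, hcont2, hcontm, hant1, hant2, hantm,
    hlim _ hant1 (fun t ht => (hbound t ht).1.2),
    hlim _ hant2 (fun t ht => (hbound t ht).2.1.2),
    hlim _ hantm (fun t ht => (hbound t ht).2.2.2)⟩
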